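/- Fix p ∈ (1/2, 1) and an integer k ≥ 2. Let W_N(k) be the N-agent equilibrium welfare of the sequential social learning model with cascade threshold k, and let φ_k = p^k/(p^k + (1−p)^k). Then φ_k − W_N(k) = Θ(1/N): there exist constants 0 < a ≤ b and an integer N₀ such that for all N ≥ N₀, a/N ≤ φ_k − W_N(k) ≤ b/N. -/

import Mathlib

open MeasureTheory ProbabilityTheory

/-- The stopped signal-imbalance walk with absorbing boundaries `±k`. -/
def stoppedWalk {Ω : Type*} (X : ℕ → Ω → ℤ) (k : ℤ) : ℕ → Ω → ℤ
  | 0 => fun _ => 0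
  | n + 1 => fun ω =>
      if |stoppedWalk X k n ω| < k then stoppedWalk X k n ω + X (n + 1) ω
      else stoppedWalk X k n ω

/-- Agent `n`'s choice (for `n ≥ 1`) under cascade threshold `k`. -/
def choice {Ω : Type*} (X : ℕ → Ω → ℤ) (k : ℤ) (n : ℕ) (ω : Ω) : ℤ :=
  if |stoppedWalk X k (n - 1) ω| < k then X n ω
  else Int.sign (stoppedWalk X k (n - 1) ω)

/-- `N`-agent equilibrium welfare `W_N(k) = (1/N) · E[#{1 ≤ n ≤ N : ρ_n = +1}]`. -/
noncomputable def welfareN {Ω : Type*} [MeasurableSpace Ω] (μ : Measure Ω)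
    (X : ℕ → Ω → ℤ) (k : ℤ) (N : ℕ) : ℝ :=
  (1 / (N : ℝ)) *
    ∫ ω, (((Finset.Icc 1 N).filter (fun n => choice X k n ω = 1)).card : ℝ) ∂μ

namespace SLProof

/-- deterministic version of the stopped walk, as a function of the whole signal sequence -/
def dwalk (k : ℤ) (x : ℕ → ℤ) : ℕ → ℤ
  | 0 => 0
  | n + 1 => if |dwalk k x n| < k then dwalk k x n + x (n + 1) else dwalk k x n

lemma stoppedWalk_eq_dwalk {Ω : Type*} (X : ℕ → Ω → ℤ) (k : ℤ) (n : ℕ) (ω : Ω) :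
    stoppedWalk X k n ω = dwalk k (fun i => X i ω) n := by
  induction n with
  | zero => rfl
  | succ n ih => simp only [stoppedWalk, dwalk, ih]

lemma dwalk_congr (k : ℤ) (x y : ℕ → ℤ) :
    ∀ n, (∀ i, i ≤ n → x i = y i) → dwalk k x n = dwalk k y n
  | 0, _ => rfl
  | n+1, h => by
      have ih := dwalk_congr k x y n (fun i hi => h i (Nat.le_succ_of_le hi))
      simp only [dwalk, ih, h (n+1) le_rfl]

lemma measurable_dwalk (k : ℤ) (n : ℕ) : Measurable fun x : ℕ → ℤ => dwalk k x n := by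
  induction n with
  | zero => exact measurable_const
  | succ n ih =>
      have hcond : MeasurableSet {x : ℕ → ℤ | |dwalk k x n| < k} :=
        ih (Set.to_countable {z : ℤ | |z| < k}).measurableSet
      exact Measurable.ite hcond (ih.add (measurable_pi_apply (n+1))) ih

lemma measurable_stoppedWalk {Ω : Type*} [MeasurableSpace Ω] {X : ℕ → Ω → ℤ}
    (hX : ∀ i, Measurable (X i)) (k : ℤ) (n : ℕ) :
    Measurable (stoppedWalk X k n) := by
  have : stoppedWalk X k n = (fun x => dwalk k x n) ∘ (fun ω i => X i ω) := by
    funext ω; exact stoppedWalk_eq_dwalk X k n ω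
  rw [this]
  exact (measurable_dwalk k n).comp (measurable_pi_lambda _ hX)

/-- once absorbed, the walk stays put -/
lemma dwalk_absorb_add {k : ℤ} {x : ℕ → ℤ} {n : ℕ} (h : k ≤ |dwalk k x n|) :
    ∀ m, dwalk k x (n + m) = dwalk k x n
  | 0 => rfl
  | m+1 => by
      have ih := dwalk_absorb_add h m
      show dwalk k x ((n+m)+1) = _
      simp only [dwalk, ih, if_neg (not_lt.mpr h)]

lemma dwalk_absorb {k : ℤ} {x : ℕ → ℤ} {n : ℕ} (h : k ≤ |dwalk k x n|) :
    ∀ m, n ≤ m → dwalk k x m = dwalk k x n := by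
  intro m hm
  have : m = n + (m - n) := by omega
  rw [this]
  exact dwalk_absorb_add h _

lemma dwalk_interior_antitone {k : ℤ} {x : ℕ → ℤ} {n : ℕ}
    (h : |dwalk k x (n+1)| < k) : |dwalk k x n| < k := by
  by_contra hc
  push_neg at hc
  have := dwalk_absorb hc (n+1) (Nat.le_succ n)
  rw [this] at h
  omega

lemma dwalk_abs_le {k : ℤ} (hk : 1 ≤ k) {x : ℕ → ℤ} (hx : ∀ i, x i = 1 ∨ x i = -1) :
    ∀ n, |dwalk k x n| ≤ k
  | 0 => by simp [dwalk]; omega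
  | n+1 => by
      by_cases h : |dwalk k x n| < k
      · simp only [dwalk, if_pos h]
        rw [abs_lt] at h
        rw [abs_le]
        rcases hx (n+1) with h1 | h1 <;> rw [h1] <;> omega
      · simp only [dwalk, if_neg h]
        exact dwalk_abs_le hk hx n

/-- a run of `+1` signals long enough leads to absorption -/
lemma dwalk_run {k : ℤ} {x : ℕ → ℤ} :
    ∀ (j : ℕ) (n : ℕ), k ≤ dwalk k x n + j → -k < dwalk k x n →
      (∀ i, 1 ≤ i → i ≤ j → x (n+i) = 1) → k ≤ |dwalk k x (n+j)|
  | 0, n, h1, _, _ => by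
      have h1' : k ≤ dwalk k x n := by simpa using h1
      simpa using le_trans h1' (le_abs_self _)
  | j+1, n, h1, h2, h3 => by
      by_cases h : |dwalk k x n| < k
      · have hx1 : x (n+1) = 1 := h3 1 le_rfl (by omega)
        have hstep : dwalk k x (n+1) = dwalk k x n + 1 := by
          simp only [dwalk, if_pos h, hx1]
        rw [abs_lt] at h
        have hb1 : k ≤ dwalk k x (n+1) + (j:ℤ) := by omega
        have hb2 : -k < dwalk k x (n+1) := by omega
        have := dwalk_run j (n+1) hb1 hb2
          (fun i hi1 hi2 => by
            have := h3 (i+1) (by omega) (by omega)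
            simpa [Nat.add_assoc, Nat.add_comm 1 i] using this)
        have hre : n + (j+1) = (n+1) + j := by omega
        rw [hre]; exact this
      · push_neg at h
        have heq := dwalk_absorb h (n+(j+1)) (by omega)
        rw [heq]; exact h

section Measure

variable {Ω : Type*} [MeasurableSpace Ω] {μ : Measure Ω} [IsProbabilityMeasure μ]
  {p : ℝ} {k : ℕ} {X : ℕ → Ω → ℤ}

lemma measure_eq_of_inter_eq {G A B : Set Ω} (hG : μ Gᶜ = 0) (h : A ∩ G = B ∩ G) :
    μ A = μ B := by
  apply measure_congr
  rw [Filter.eventuallyEq_set]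
  have hGae : ∀ᵐ ω ∂μ, ω ∈ G := by
    rw [MeasureTheory.ae_iff]
    exact hG
  filter_upwards [hGae] with ω hω
  constructor
  · intro hA
    have : ω ∈ B ∩ G := h ▸ (Set.mem_inter hA hω)
    exact this.1
  · intro hB
    have : ω ∈ A ∩ G := h.symm ▸ (Set.mem_inter hB hω)
    exact this.1

/-- the good event: all signals are `±1` -/
def Gset (X : ℕ → Ω → ℤ) : Set Ω := {ω | ∀ i, X i ω = 1 ∨ X i ω = -1}

lemma measure_Gset_compl (hp : p ∈ Set.Ioo (1/2 : ℝ) 1) (hX : ∀ i, Measurable (X i))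
    (hup : ∀ i, μ {ω | X i ω = 1} = ENNReal.ofReal p)
    (hdown : ∀ i, μ {ω | X i ω = -1} = ENNReal.ofReal (1 - p)) :
    μ (Gset X)ᶜ = 0 := by
  have h1 : (Gset X)ᶜ = ⋃ i, ({ω | X i ω = 1} ∪ {ω | X i ω = -1})ᶜ := by
    ext ω
    simp [Gset, Set.mem_iUnion, not_forall]
  rw [h1]
  apply measure_iUnion_null
  intro i
  have hmeas : MeasurableSet ({ω | X i ω = 1} ∪ {ω | X i ω = -1}) := by
    exact ((hX i) (measurableSet_singleton 1)).union ((hX i) (measurableSet_singleton (-1)))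
  have hdisj : Disjoint {ω | X i ω = 1} {ω | X i ω = -1} := by
    rw [Set.disjoint_left]
    intro ω h1 h2
    simp only [Set.mem_setOf_eq] at h1 h2
    omega
  have hu : μ ({ω | X i ω = 1} ∪ {ω | X i ω = -1}) = 1 := by
    rw [measure_union hdisj ((hX i) (measurableSet_singleton (-1))), hup i, hdown i,
      ← ENNReal.ofReal_add (by linarith [hp.1]) (by linarith [hp.2])]
    norm_num
  rw [measure_compl hmeas (by simp), hu]
  simp

lemma indep_event (hX : ∀ i, Measurable (X i))
    (hindep : iIndepFun X μ)
    {m l : ℕ} (hml : m < l) {S : Set (ℕ → ℤ)} (hS : MeasurableSet S)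
    (hdep : ∀ x y : ℕ → ℤ, (∀ i, i ≤ m → x i = y i) → (x ∈ S ↔ y ∈ S)) (t : Set ℤ) :
    μ ({ω | (fun i => X i ω) ∈ S} ∩ X l ⁻¹' t) =
      μ {ω | (fun i => X i ω) ∈ S} * μ (X l ⁻¹' t) := by
  classical
  set F : Ω → (ℕ → ℤ) := fun ω i => if i ≤ m then X i ω else 0 with hF
  have hFmeas : Measurable F := by
    apply measurable_pi_lambda
    intro i
    by_cases h : i ≤ m
    · simpa [hF, h] using hX i
    · simpa [hF, h] using measurable_const
  have hIndep : IndepFun F (X l) μ := by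
    have hdisj : Disjoint (Finset.range (m+1)) ({l} : Finset ℕ) := by
      simp only [Finset.disjoint_singleton_right, Finset.mem_range]
      omega
    have h := hindep.indepFun_finset (Finset.range (m+1)) {l} hdisj hX
    have h2 := h.comp
      (φ := fun v : (Finset.range (m+1) : Finset ℕ) → ℤ =>
        (fun i : ℕ => if hi : i ≤ m then v ⟨i, Finset.mem_range.mpr (by omega)⟩ else 0))
      (ψ := fun v : (({l} : Finset ℕ) : Finset ℕ) → ℤ => v ⟨l, Finset.mem_singleton_self l⟩)
      (by
        apply measurable_pi_lambda
        intro i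
        by_cases h : i ≤ m
        · simpa [h] using measurable_pi_apply _
        · simpa [h] using measurable_const)
      (measurable_pi_apply _ :
        Measurable fun v : (({l} : Finset ℕ) : Finset ℕ) → ℤ => v ⟨l, Finset.mem_singleton_self l⟩)
    convert h2 using 1
    all_goals
      funext ω
      try rfl
  have hset : {ω | (fun i => X i ω) ∈ S} = F ⁻¹' S := by
    ext ω
    simp only [Set.mem_setOf_eq, Set.mem_preimage]
    exact hdep _ _ (fun i hi => by simp [hF, hi])
  rw [hset]
  exact hIndep.measure_inter_preimage_eq_mul _ _ hS ((Set.to_countable t).measurableSet)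

end Measure
section Law

variable {Ω : Type*} [MeasurableSpace Ω] {μ : Measure Ω} [IsProbabilityMeasure μ]
  {p : ℝ} {k : ℕ} {X : ℕ → Ω → ℤ}

set_option linter.unusedSectionVars false

lemma meas_walk_set (hX : ∀ i, Measurable (X i)) (s : Set ℤ) (n : ℕ) :
    MeasurableSet {ω | stoppedWalk X (k:ℤ) n ω ∈ s} :=
  (measurable_stoppedWalk hX (k:ℤ) n) (Set.to_countable s).measurableSet

lemma meas_X_set (hX : ∀ i, Measurable (X i)) (l : ℕ) (s : Set ℤ) :
    MeasurableSet {ω | X l ω ∈ s} :=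
  (hX l) (Set.to_countable s).measurableSet

/-- product rule: a walk-event at time `n` is independent of the `(n+1)`-st signal -/
lemma walk_indep (hX : ∀ i, Measurable (X i))
    (hindep : iIndepFun X μ)
    (s : Set ℤ) (n l : ℕ) (hnl : n < l) (t : Set ℤ) :
    μ ({ω | stoppedWalk X (k:ℤ) n ω ∈ s} ∩ {ω | X l ω ∈ t}) =
      μ {ω | stoppedWalk X (k:ℤ) n ω ∈ s} * μ {ω | X l ω ∈ t} := by
  have hS : MeasurableSet ((fun x => dwalk (k:ℤ) x n) ⁻¹' s) :=
    (measurable_dwalk (k:ℤ) n) (Set.to_countable s).measurableSet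
  have h := indep_event (μ := μ) hX hindep hnl hS
    (fun x y hxy => by
      simp only [Set.mem_preimage]
      rw [dwalk_congr (k:ℤ) x y n hxy]) t
  have e1 : {ω | (fun i => X i ω) ∈ (fun x => dwalk (k:ℤ) x n) ⁻¹' s}
      = {ω | stoppedWalk X (k:ℤ) n ω ∈ s} := by
    ext ω; simp [stoppedWalk_eq_dwalk]
  have e2 : X l ⁻¹' t = {ω | X l ω ∈ t} := rfl
  rw [e1, e2] at h
  exact h

lemma law_rec (hp : p ∈ Set.Ioo (1/2 : ℝ) 1) (hX : ∀ i, Measurable (X i))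
    (hindep : iIndepFun X μ)
    (hup : ∀ i, μ {ω | X i ω = 1} = ENNReal.ofReal p)
    (hdown : ∀ i, μ {ω | X i ω = -1} = ENNReal.ofReal (1 - p))
    (n : ℕ) (j : ℤ) :
    μ {ω | stoppedWalk X (k:ℤ) (n+1) ω = j} =
      (if |j-1| < (k:ℤ) then μ {ω | stoppedWalk X (k:ℤ) n ω = j-1} * ENNReal.ofReal p else 0)
      + (if |j+1| < (k:ℤ) then μ {ω | stoppedWalk X (k:ℤ) n ω = j+1} * ENNReal.ofReal (1-p) else 0)
      + (if (k:ℤ) ≤ |j| then μ {ω | stoppedWalk X (k:ℤ) n ω = j} else 0) := by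
  classical
  have hG : μ (Gset X)ᶜ = 0 := measure_Gset_compl hp hX hup hdown
  set D1 : Set Ω := {ω | (|j-1| < (k:ℤ)) ∧ stoppedWalk X (k:ℤ) n ω = j-1 ∧ X (n+1) ω = 1}
    with hD1
  set D2 : Set Ω := {ω | (|j+1| < (k:ℤ)) ∧ stoppedWalk X (k:ℤ) n ω = j+1 ∧ X (n+1) ω = -1}
    with hD2
  set D3 : Set Ω := {ω | ((k:ℤ) ≤ |j|) ∧ stoppedWalk X (k:ℤ) n ω = j} with hD3
  have hm1 : MeasurableSet D1 := by
    rw [hD1, Set.setOf_and, Set.setOf_and]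
    exact (MeasurableSet.const _).inter
      ((meas_walk_set hX {j-1} n).inter (meas_X_set hX (n+1) {1}))
  have hm2 : MeasurableSet D2 := by
    rw [hD2, Set.setOf_and, Set.setOf_and]
    exact (MeasurableSet.const _).inter
      ((meas_walk_set hX {j+1} n).inter (meas_X_set hX (n+1) {-1}))
  have hm3 : MeasurableSet D3 := by
    rw [hD3, Set.setOf_and]
    exact (MeasurableSet.const _).inter (meas_walk_set hX {j} n)
  -- step 1: up to the good event, the level set decomposes
  have hstep1 : μ {ω | stoppedWalk X (k:ℤ) (n+1) ω = j} = μ (D1 ∪ D2 ∪ D3) := by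
    apply measure_eq_of_inter_eq hG
    ext ω
    simp only [Set.mem_inter_iff, Set.mem_setOf_eq, Set.mem_union, hD1, hD2, hD3, Gset]
    constructor
    · rintro ⟨hw, hGω⟩
      refine ⟨?_, hGω⟩
      by_cases h : |stoppedWalk X (k:ℤ) n ω| < (k:ℤ)
      · have hw' : stoppedWalk X (k:ℤ) n ω + X (n+1) ω = j := by
          simpa [stoppedWalk, if_pos h] using hw
        rcases hGω (n+1) with h1 | h1
        · left; left
          have hK : stoppedWalk X (k:ℤ) n ω = j - 1 := by omega
          rw [hK] at h
          exact ⟨h, hK, h1⟩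
        · left; right
          have hK : stoppedWalk X (k:ℤ) n ω = j + 1 := by omega
          rw [hK] at h
          exact ⟨h, hK, h1⟩
      · push_neg at h
        have hw' : stoppedWalk X (k:ℤ) n ω = j := by
          simpa [stoppedWalk, if_neg (not_lt.mpr h)] using hw
        right
        rw [hw'] at h
        exact ⟨h, hw'⟩
    · rintro ⟨h, hGω⟩
      refine ⟨?_, hGω⟩
      rcases h with (⟨hc, hK, hx⟩ | ⟨hc, hK, hx⟩) | ⟨hc, hK⟩
      · have h' : |stoppedWalk X (k:ℤ) n ω| < (k:ℤ) := by rw [hK]; exact hc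
        simp only [stoppedWalk, if_pos h', hK, hx]
        omega
      · have h' : |stoppedWalk X (k:ℤ) n ω| < (k:ℤ) := by rw [hK]; exact hc
        simp only [stoppedWalk, if_pos h', hK, hx]
        omega
      · have h' : ¬ |stoppedWalk X (k:ℤ) n ω| < (k:ℤ) := by rw [hK]; omega
        simp only [stoppedWalk, if_neg h']
        exact hK
  -- step 2: the three pieces are disjoint
  have hd12 : Disjoint D1 D2 := by
    rw [Set.disjoint_left]
    intro ω h1 h2
    simp only [hD1, hD2, Set.mem_setOf_eq] at h1 h2
    omega
  have hd13 : Disjoint (D1 ∪ D2) D3 := by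
    rw [Set.disjoint_left]
    intro ω h1 h3
    simp only [Set.mem_union, hD1, hD2, hD3, Set.mem_setOf_eq] at h1 h3
    rcases h1 with ⟨_, hK1, _⟩ | ⟨_, hK1, _⟩ <;> omega
  have hstep2 : μ (D1 ∪ D2 ∪ D3) = μ D1 + μ D2 + μ D3 := by
    rw [measure_union hd13 hm3, measure_union hd12 hm2]
  -- step 3: compute the three measures
  have hμ1 : μ D1 = (if |j-1| < (k:ℤ) then
      μ {ω | stoppedWalk X (k:ℤ) n ω = j-1} * ENNReal.ofReal p else 0) := by
    by_cases hc : |j-1| < (k:ℤ)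
    · rw [if_pos hc]
      have e : D1 = {ω | stoppedWalk X (k:ℤ) n ω ∈ ({j-1} : Set ℤ)}
          ∩ {ω | X (n+1) ω ∈ ({1} : Set ℤ)} := by
        ext ω; simp [hD1, hc]
      have e1 : {ω | stoppedWalk X (k:ℤ) n ω ∈ ({j-1} : Set ℤ)}
          = {ω | stoppedWalk X (k:ℤ) n ω = j-1} := by ext ω; simp
      have e2 : {ω | X (n+1) ω ∈ ({1} : Set ℤ)} = {ω | X (n+1) ω = 1} := by ext ω; simp
      rw [e, walk_indep hX hindep _ n (n+1) (Nat.lt_succ_self n) _, e1, e2, hup (n+1)]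
    · rw [if_neg hc]
      have e : D1 = ∅ := by ext ω; simp [hD1, hc]
      rw [e, measure_empty]
  have hμ2 : μ D2 = (if |j+1| < (k:ℤ) then
      μ {ω | stoppedWalk X (k:ℤ) n ω = j+1} * ENNReal.ofReal (1-p) else 0) := by
    by_cases hc : |j+1| < (k:ℤ)
    · rw [if_pos hc]
      have e : D2 = {ω | stoppedWalk X (k:ℤ) n ω ∈ ({j+1} : Set ℤ)}
          ∩ {ω | X (n+1) ω ∈ ({-1} : Set ℤ)} := by
        ext ω; simp [hD2, hc]
      have e1 : {ω | stoppedWalk X (k:ℤ) n ω ∈ ({j+1} : Set ℤ)}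
          = {ω | stoppedWalk X (k:ℤ) n ω = j+1} := by ext ω; simp
      have e2 : {ω | X (n+1) ω ∈ ({-1} : Set ℤ)} = {ω | X (n+1) ω = -1} := by ext ω; simp
      rw [e, walk_indep hX hindep _ n (n+1) (Nat.lt_succ_self n) _, e1, e2, hdown (n+1)]
    · rw [if_neg hc]
      have e : D2 = ∅ := by ext ω; simp [hD2, hc]
      rw [e, measure_empty]
  have hμ3 : μ D3 = (if (k:ℤ) ≤ |j| then μ {ω | stoppedWalk X (k:ℤ) n ω = j} else 0) := by
    by_cases hc : (k:ℤ) ≤ |j|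
    · rw [if_pos hc]
      congr 1
      ext ω; simp [hD3, hc]
    · rw [if_neg hc]
      have e : D3 = ∅ := by ext ω; simp [hD3, hc]
      rw [e, measure_empty]
  rw [hstep1, hstep2, hμ1, hμ2, hμ3]

end Law

section RealLaw

variable {Ω : Type*} [MeasurableSpace Ω]

/-- the real-valued law of the stopped walk -/
noncomputable def Lr (μ : Measure Ω) (X : ℕ → Ω → ℤ) (k : ℕ) (n : ℕ) (j : ℤ) : ℝ :=
  (μ {ω | stoppedWalk X (k:ℤ) n ω = j}).toReal

variable {μ : Measure Ω} [IsProbabilityMeasure μ] {p : ℝ} {k : ℕ} {X : ℕ → Ω → ℤ}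

set_option linter.unusedSectionVars false

lemma real_rec (hp : p ∈ Set.Ioo (1/2 : ℝ) 1) (hX : ∀ i, Measurable (X i))
    (hindep : iIndepFun X μ)
    (hup : ∀ i, μ {ω | X i ω = 1} = ENNReal.ofReal p)
    (hdown : ∀ i, μ {ω | X i ω = -1} = ENNReal.ofReal (1 - p))
    (n : ℕ) (j : ℤ) :
    Lr μ X k (n+1) j =
      (if |j-1| < (k:ℤ) then Lr μ X k n (j-1) * p else 0)
      + (if |j+1| < (k:ℤ) then Lr μ X k n (j+1) * (1-p) else 0)
      + (if (k:ℤ) ≤ |j| then Lr μ X k n j else 0) := by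
  have hp0 : (0:ℝ) ≤ p := by linarith [hp.1]
  have hq0 : (0:ℝ) ≤ 1 - p := by linarith [hp.2]
  simp only [Lr]
  rw [law_rec hp hX hindep hup hdown n j]
  have fin1 : (if |j-1| < (k:ℤ) then
      μ {ω | stoppedWalk X (k:ℤ) n ω = j-1} * ENNReal.ofReal p else 0) ≠ ⊤ := by
    split_ifs
    · exact ENNReal.mul_ne_top (measure_ne_top μ _) ENNReal.ofReal_ne_top
    · exact ENNReal.zero_ne_top
  have fin2 : (if |j+1| < (k:ℤ) then
      μ {ω | stoppedWalk X (k:ℤ) n ω = j+1} * ENNReal.ofReal (1-p) else 0) ≠ ⊤ := by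
    split_ifs
    · exact ENNReal.mul_ne_top (measure_ne_top μ _) ENNReal.ofReal_ne_top
    · exact ENNReal.zero_ne_top
  have fin3 : (if (k:ℤ) ≤ |j| then μ {ω | stoppedWalk X (k:ℤ) n ω = j} else 0) ≠ ⊤ := by
    split_ifs
    · exact measure_ne_top μ _
    · exact ENNReal.zero_ne_top
  rw [ENNReal.toReal_add (ENNReal.add_ne_top.mpr ⟨fin1, fin2⟩) fin3,
    ENNReal.toReal_add fin1 fin2]
  congr 1
  · congr 1
    · split_ifs
      · rw [ENNReal.toReal_mul, ENNReal.toReal_ofReal hp0]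
      · simp
    · split_ifs
      · rw [ENNReal.toReal_mul, ENNReal.toReal_ofReal hq0]
      · simp
  · split_ifs <;> simp

lemma law_sym (hp : p ∈ Set.Ioo (1/2 : ℝ) 1) (hk : 2 ≤ k) (hX : ∀ i, Measurable (X i))
    (hindep : iIndepFun X μ)
    (hup : ∀ i, μ {ω | X i ω = 1} = ENNReal.ofReal p)
    (hdown : ∀ i, μ {ω | X i ω = -1} = ENNReal.ofReal (1 - p))
    (n : ℕ) : ∀ j : ℕ, Lr μ X k n (-(j:ℤ)) = ((1-p)/p)^j * Lr μ X k n (j:ℤ) := by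
  have hp0 : (0:ℝ) < p := by linarith [hp.1]
  have hrp : ((1-p)/p) * p = 1 - p := div_mul_cancel₀ _ (ne_of_gt hp0)
  set r : ℝ := (1-p)/p with hr
  induction n with
  | zero =>
      have hL0 : ∀ c : ℤ, Lr μ X k 0 c = if c = 0 then 1 else 0 := by
        intro c
        by_cases hc : c = 0
        · subst hc
          have : {ω : Ω | stoppedWalk X (k:ℤ) 0 ω = 0} = Set.univ := by
            ext ω; simp [stoppedWalk]
          simp [Lr, this]
        · have : {ω : Ω | stoppedWalk X (k:ℤ) 0 ω = c} = ∅ := by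
            ext ω; simp [stoppedWalk]; omega
          simp [Lr, this, hc]
      intro j
      rw [hL0, hL0]
      rcases Nat.eq_zero_or_pos j with hj | hj
      · subst hj; norm_num
      · have h1 : ¬ (-(j:ℤ) = 0) := by omega
        have h2 : ¬ ((j:ℤ) = 0) := by omega
        rw [if_neg h1, if_neg h2]
        ring
  | succ n ih =>
      intro j
      rcases Nat.eq_zero_or_pos j with hj | hj
      · subst hj; norm_num
      obtain ⟨m, rfl⟩ : ∃ m, j = m + 1 := ⟨j-1, by omega⟩
      rw [real_rec hp hX hindep hup hdown, real_rec hp hX hindep hup hdown]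
      have habs1 : |(-((m+1:ℕ):ℤ)) - 1| = ((m+1:ℕ):ℤ)+1 := by
        rw [abs_of_nonpos (by omega)]; ring
      have habs2 : |(-((m+1:ℕ):ℤ)) + 1| = ((m+1:ℕ):ℤ)-1 := by
        rw [abs_of_nonpos (by omega)]; ring
      have habs3 : |(-((m+1:ℕ):ℤ))| = ((m+1:ℕ):ℤ) := by
        rw [abs_of_nonpos (by omega)]; ring
      have habs4 : |((m+1:ℕ):ℤ) - 1| = ((m+1:ℕ):ℤ)-1 := abs_of_nonneg (by omega)
      have habs5 : |((m+1:ℕ):ℤ) + 1| = ((m+1:ℕ):ℤ)+1 := abs_of_nonneg (by omega)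
      have habs6 : |((m+1:ℕ):ℤ)| = ((m+1:ℕ):ℤ) := abs_of_nonneg (by omega)
      have hI1 : Lr μ X k n (-((m+1:ℕ):ℤ) - 1) = r^(m+2) * Lr μ X k n (((m+1:ℕ):ℤ)+1) := by
        have e0 : -((m+1:ℕ):ℤ) - 1 = -((m+2:ℕ):ℤ) := by push_cast; ring
        have e1 : ((m+2:ℕ):ℤ) = ((m+1:ℕ):ℤ)+1 := by push_cast; ring
        rw [e0, ih (m+2), e1]
      have hI2 : Lr μ X k n (-((m+1:ℕ):ℤ) + 1) = r^m * Lr μ X k n (((m+1:ℕ):ℤ)-1) := by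
        have e0 : -((m+1:ℕ):ℤ) + 1 = -((m:ℕ):ℤ) := by push_cast; ring
        have e1 : ((m:ℕ):ℤ) = ((m+1:ℕ):ℤ)-1 := by push_cast; ring
        rw [e0, ih m, e1]
      have hI3 : Lr μ X k n (-((m+1:ℕ):ℤ)) = r^(m+1) * Lr μ X k n ((m+1:ℕ):ℤ) := ih (m+1)
      have ej1 : r^(m+2) = r^m*(r*r) := by rw [pow_add]; ring
      have ej : r^(m+1) = r^m*r := pow_succ r m
      simp only [habs1, habs2, habs3, habs4, habs5, habs6]
      split_ifs with h1 h2 h3 h2 h3 h3 h3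
      all_goals try (exfalso; omega)
      all_goals simp only [hI1, hI2, hI3, ej1, ej, ← hrp]
      all_goals ring
end RealLaw

/-- interior at a later time implies interior earlier -/
lemma dwalk_interior_mono {k : ℤ} {x : ℕ → ℤ} {n m : ℕ} (hnm : n ≤ m)
    (h : |dwalk k x m| < k) : |dwalk k x n| < k := by
  by_contra hc
  push_neg at hc
  have := dwalk_absorb hc m hnm
  rw [this] at h
  omega

section Mass

variable {Ω : Type*} [MeasurableSpace Ω]

/-- interior mass of the stopped walk -/
noncomputable def Mr (μ : Measure Ω) (X : ℕ → Ω → ℤ) (k : ℕ) (n : ℕ) : ℝ :=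
  (μ {ω | |stoppedWalk X (k:ℤ) n ω| < (k:ℤ)}).toReal

variable {μ : Measure Ω} [IsProbabilityMeasure μ] {p : ℝ} {k : ℕ} {X : ℕ → Ω → ℤ}

set_option linter.unusedSectionVars false

lemma Mr_zero (hk : 2 ≤ k) : Mr μ X k 0 = 1 := by
  have : {ω : Ω | |stoppedWalk X (k:ℤ) 0 ω| < (k:ℤ)} = Set.univ := by
    ext ω
    simp only [Set.mem_setOf_eq, Set.mem_univ, iff_true]
    show |(0:ℤ)| < (k:ℤ)
    simp; omega
  simp [Mr, this]

lemma Mr_nonneg : 0 ≤ Mr μ X k n := ENNReal.toReal_nonneg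

lemma Mr_antitone (n m : ℕ) (hnm : n ≤ m) : Mr μ X k m ≤ Mr μ X k n := by
  apply ENNReal.toReal_mono (measure_ne_top μ _)
  apply measure_mono
  intro ω hω
  simp only [Set.mem_setOf_eq, stoppedWalk_eq_dwalk] at hω ⊢
  exact dwalk_interior_mono hnm hω

lemma Mr_le_one : Mr μ X k n ≤ 1 := by
  rw [show (1:ℝ) = (μ Set.univ).toReal by simp]
  exact ENNReal.toReal_mono (measure_ne_top μ _) (measure_mono (Set.subset_univ _))

lemma mass_split (hp : p ∈ Set.Ioo (1/2 : ℝ) 1) (hk : 2 ≤ k) (hX : ∀ i, Measurable (X i))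
    (hup : ∀ i, μ {ω | X i ω = 1} = ENNReal.ofReal p)
    (hdown : ∀ i, μ {ω | X i ω = -1} = ENNReal.ofReal (1 - p)) (n : ℕ) :
    Mr μ X k n = 1 - Lr μ X k n (k:ℤ) - Lr μ X k n (-(k:ℤ)) := by
  have hG : μ (Gset X)ᶜ = 0 := measure_Gset_compl hp hX hup hdown
  set A := {ω : Ω | |stoppedWalk X (k:ℤ) n ω| < (k:ℤ)} with hA
  set B := {ω : Ω | stoppedWalk X (k:ℤ) n ω = (k:ℤ)} with hB
  set C := {ω : Ω | stoppedWalk X (k:ℤ) n ω = -(k:ℤ)} with hC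
  have hmA : MeasurableSet A := meas_walk_set hX {z | |z| < (k:ℤ)} n
  have hmB : MeasurableSet B := meas_walk_set hX {(k:ℤ)} n
  have hmC : MeasurableSet C := meas_walk_set hX {-(k:ℤ)} n
  have hdBC : Disjoint B C := by
    rw [Set.disjoint_left]
    intro ω h1 h2
    simp only [hB, hC, Set.mem_setOf_eq] at h1 h2
    omega
  have hdABC : Disjoint A (B ∪ C) := by
    rw [Set.disjoint_left]
    intro ω h1 h2
    simp only [hA, Set.mem_setOf_eq] at h1
    simp only [Set.mem_union, hB, hC, Set.mem_setOf_eq] at h2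
    rcases h2 with h2 | h2 <;> rw [h2] at h1
    · rw [show |(k:ℤ)| = (k:ℤ) from abs_of_nonneg (by omega)] at h1; omega
    · rw [show |(-(k:ℤ))| = (k:ℤ) by rw [abs_neg]; exact abs_of_nonneg (by omega)] at h1; omega
  have huniv : μ (A ∪ (B ∪ C)) = 1 := by
    have he : (A ∪ (B ∪ C)) ∩ Gset X = Set.univ ∩ Gset X := by
      ext ω
      simp only [Set.mem_inter_iff, Set.mem_union, Set.mem_univ, true_and, hA, hB, hC,
        Set.mem_setOf_eq, Gset]
      constructor
      · rintro ⟨_, h⟩; exact h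
      · intro hGω
        refine ⟨?_, hGω⟩
        have habs : |stoppedWalk X (k:ℤ) n ω| ≤ (k:ℤ) := by
          rw [stoppedWalk_eq_dwalk]
          exact dwalk_abs_le (by omega) hGω n
        rcases abs_cases (stoppedWalk X (k:ℤ) n ω) with ⟨he, _⟩ | ⟨he, _⟩ <;>
          rw [he] at habs ⊢ <;> omega
    rw [measure_eq_of_inter_eq hG he]
    simp
  rw [measure_union hdABC (hmB.union hmC), measure_union hdBC hmC] at huniv
  have h1 : (μ A).toReal + ((μ B).toReal + (μ C).toReal) = 1 := by
    have := congrArg ENNReal.toReal huniv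
    rw [ENNReal.toReal_add (measure_ne_top μ _)
        (ENNReal.add_ne_top.mpr ⟨measure_ne_top μ _, measure_ne_top μ _⟩),
      ENNReal.toReal_add (measure_ne_top μ _) (measure_ne_top μ _)] at this
    rw [ENNReal.toReal_one] at this
    linarith [this]
  simp only [Mr, Lr]
  linarith

lemma choice_prob (hp : p ∈ Set.Ioo (1/2 : ℝ) 1) (hk : 2 ≤ k) (hX : ∀ i, Measurable (X i))
    (hindep : iIndepFun X μ)
    (hup : ∀ i, μ {ω | X i ω = 1} = ENNReal.ofReal p)
    (hdown : ∀ i, μ {ω | X i ω = -1} = ENNReal.ofReal (1 - p)) (n : ℕ) :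
    (μ {ω | _root_.choice X (k:ℤ) (n+1) ω = 1}).toReal = Mr μ X k n * p + Lr μ X k n (k:ℤ) := by
  have hG : μ (Gset X)ᶜ = 0 := measure_Gset_compl hp hX hup hdown
  have hp0 : (0:ℝ) ≤ p := by linarith [hp.1]
  set D1 := {ω : Ω | |stoppedWalk X (k:ℤ) n ω| < (k:ℤ) ∧ X (n+1) ω = 1} with hD1
  set D2 := {ω : Ω | stoppedWalk X (k:ℤ) n ω = (k:ℤ)} with hD2
  have hstep1 : μ {ω | _root_.choice X (k:ℤ) (n+1) ω = 1} = μ (D1 ∪ D2) := by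
    apply measure_eq_of_inter_eq hG
    ext ω
    simp only [Set.mem_inter_iff, Set.mem_setOf_eq, Set.mem_union, hD1, hD2, Gset,
      _root_.choice, Nat.add_sub_cancel]
    constructor
    · rintro ⟨hc, hGω⟩
      refine ⟨?_, hGω⟩
      by_cases h : |stoppedWalk X (k:ℤ) n ω| < (k:ℤ)
      · rw [if_pos h] at hc
        exact Or.inl ⟨h, hc⟩
      · rw [if_neg h] at hc
        push_neg at h
        have hpos : 0 < stoppedWalk X (k:ℤ) n ω := Int.sign_eq_one_iff_pos.mp hc
        have habs : |stoppedWalk X (k:ℤ) n ω| ≤ (k:ℤ) := by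
          rw [stoppedWalk_eq_dwalk]
          exact dwalk_abs_le (by omega) hGω n
        right
        rw [abs_of_pos hpos] at h habs
        omega
    · rintro ⟨hc, hGω⟩
      refine ⟨?_, hGω⟩
      rcases hc with ⟨h, hx⟩ | h
      · rw [if_pos h]; exact hx
      · have hni : ¬ |stoppedWalk X (k:ℤ) n ω| < (k:ℤ) := by
          rw [h, abs_of_nonneg (by omega : (0:ℤ) ≤ (k:ℤ))]
          omega
        rw [if_neg hni, h]
        exact Int.sign_eq_one_iff_pos.mpr (by omega)
  have hdisj : Disjoint D1 D2 := by
    rw [Set.disjoint_left]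
    intro ω h1 h2
    simp only [hD1, Set.mem_setOf_eq] at h1
    simp only [hD2, Set.mem_setOf_eq] at h2
    rw [h2, abs_of_nonneg (by omega : (0:ℤ) ≤ (k:ℤ))] at h1
    omega
  have hmD2 : MeasurableSet D2 := meas_walk_set hX {(k:ℤ)} n
  have hμ1 : μ D1 = μ {ω | |stoppedWalk X (k:ℤ) n ω| < (k:ℤ)} * ENNReal.ofReal p := by
    have e : D1 = {ω | stoppedWalk X (k:ℤ) n ω ∈ {z : ℤ | |z| < (k:ℤ)}}
        ∩ {ω | X (n+1) ω ∈ ({1} : Set ℤ)} := by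
      ext ω; simp [hD1]
    rw [e, walk_indep hX hindep _ n (n+1) (Nat.lt_succ_self n) _]
    have e2 : {ω : Ω | X (n+1) ω ∈ ({1} : Set ℤ)} = {ω | X (n+1) ω = 1} := by ext ω; simp
    rw [e2, hup (n+1)]
    rfl
  rw [hstep1, measure_union hdisj hmD2, hμ1]
  rw [ENNReal.toReal_add (ENNReal.mul_ne_top (measure_ne_top μ _) ENNReal.ofReal_ne_top)
    (measure_ne_top μ _), ENNReal.toReal_mul, ENNReal.toReal_ofReal hp0]
  rfl

end Mass

section Block

variable {Ω : Type*} [MeasurableSpace Ω] {μ : Measure Ω} [IsProbabilityMeasure μ]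
  {p : ℝ} {k : ℕ} {X : ℕ → Ω → ℤ}

set_option linter.unusedSectionVars false

lemma meas_E (hX : ∀ i, Measurable (X i)) (n j : ℕ) :
    MeasurableSet {ω : Ω | |stoppedWalk X (k:ℤ) n ω| < (k:ℤ)
      ∧ ∀ i, 1 ≤ i → i ≤ j → X (n+i) ω = 1} := by
  have e : {ω : Ω | |stoppedWalk X (k:ℤ) n ω| < (k:ℤ) ∧ ∀ i, 1 ≤ i → i ≤ j → X (n+i) ω = 1}
      = {ω | |stoppedWalk X (k:ℤ) n ω| < (k:ℤ)}
        ∩ ⋂ (i : Fin j), {ω | X (n+1+(i:ℕ)) ω = 1} := by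
    ext ω
    simp only [Set.mem_inter_iff, Set.mem_setOf_eq, Set.mem_iInter]
    constructor
    · rintro ⟨h1, h2⟩
      refine ⟨h1, fun i => ?_⟩
      rw [show n+1+(i:ℕ) = n+((i:ℕ)+1) by omega]
      exact h2 _ (by omega) (by omega)
    · rintro ⟨h1, h2⟩
      refine ⟨h1, fun i hi1 hi2 => ?_⟩
      have := h2 ⟨i-1, by omega⟩
      rw [show ((⟨i-1, by omega⟩ : Fin j) : ℕ) = i - 1 from rfl,
        show n+1+(i-1) = n+i by omega] at this
      exact this
  rw [e]
  exact (meas_walk_set hX {z | |z| < (k:ℤ)} n).inter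
    (MeasurableSet.iInter fun i => meas_X_set hX _ {1})

lemma block_prob (hp : p ∈ Set.Ioo (1/2 : ℝ) 1) (hX : ∀ i, Measurable (X i))
    (hindep : iIndepFun X μ)
    (hup : ∀ i, μ {ω | X i ω = 1} = ENNReal.ofReal p)
    (n : ℕ) : ∀ j : ℕ,
    μ {ω | |stoppedWalk X (k:ℤ) n ω| < (k:ℤ) ∧ ∀ i, 1 ≤ i → i ≤ j → X (n+i) ω = 1}
      = μ {ω | |stoppedWalk X (k:ℤ) n ω| < (k:ℤ)} * (ENNReal.ofReal p)^j := by
  intro j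
  induction j with
  | zero =>
      have e : {ω : Ω | |stoppedWalk X (k:ℤ) n ω| < (k:ℤ)
          ∧ ∀ i, 1 ≤ i → i ≤ 0 → X (n+i) ω = 1}
          = {ω | |stoppedWalk X (k:ℤ) n ω| < (k:ℤ)} := by
        ext ω
        simp only [Set.mem_setOf_eq]
        exact ⟨fun h => h.1, fun h => ⟨h, fun i h1 h2 => by omega⟩⟩
      rw [e, pow_zero, mul_one]
  | succ j ih =>
      set S : Set (ℕ → ℤ) :=
        {x | |dwalk (k:ℤ) x n| < (k:ℤ) ∧ ∀ i, 1 ≤ i → i ≤ j → x (n+i) = 1} with hS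
      have hSmeas : MeasurableSet S := by
        have e : S = (fun x => dwalk (k:ℤ) x n) ⁻¹' {z | |z| < (k:ℤ)}
            ∩ ⋂ (i : Fin j), {x : ℕ → ℤ | x (n+1+(i:ℕ)) = 1} := by
          ext x
          simp only [hS, Set.mem_inter_iff, Set.mem_preimage, Set.mem_setOf_eq, Set.mem_iInter]
          constructor
          · rintro ⟨h1, h2⟩
            refine ⟨h1, fun i => ?_⟩
            rw [show n+1+(i:ℕ) = n+((i:ℕ)+1) by omega]
            exact h2 _ (by omega) (by omega)
          · rintro ⟨h1, h2⟩
            refine ⟨h1, fun i hi1 hi2 => ?_⟩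
            have := h2 ⟨i-1, by omega⟩
            rw [show ((⟨i-1, by omega⟩ : Fin j) : ℕ) = i - 1 from rfl,
              show n+1+(i-1) = n+i by omega] at this
            exact this
        rw [e]
        exact ((measurable_dwalk (k:ℤ) n) (Set.to_countable _).measurableSet).inter
          (MeasurableSet.iInter fun i =>
            (measurable_pi_apply _) (measurableSet_singleton 1))
      have hdep : ∀ x y : ℕ → ℤ, (∀ i, i ≤ n + j → x i = y i) → (x ∈ S ↔ y ∈ S) := by
        intro x y hxy
        simp only [hS, Set.mem_setOf_eq]
        rw [dwalk_congr (k:ℤ) x y n (fun i hi => hxy i (by omega))]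
        constructor
        · rintro ⟨h1, h2⟩
          exact ⟨h1, fun i hi1 hi2 => by rw [← hxy (n+i) (by omega)]; exact h2 i hi1 hi2⟩
        · rintro ⟨h1, h2⟩
          exact ⟨h1, fun i hi1 hi2 => by rw [hxy (n+i) (by omega)]; exact h2 i hi1 hi2⟩
      have e : {ω : Ω | |stoppedWalk X (k:ℤ) n ω| < (k:ℤ)
          ∧ ∀ i, 1 ≤ i → i ≤ j+1 → X (n+i) ω = 1}
          = {ω | (fun i => X i ω) ∈ S} ∩ X (n+(j+1)) ⁻¹' {1} := by
        ext ω
        simp only [Set.mem_inter_iff, Set.mem_setOf_eq, Set.mem_preimage, hS,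
          Set.mem_singleton_iff, ← stoppedWalk_eq_dwalk]
        constructor
        · rintro ⟨h1, h2⟩
          exact ⟨⟨h1, fun i hi1 hi2 => h2 i hi1 (by omega)⟩, h2 (j+1) (by omega) le_rfl⟩
        · rintro ⟨⟨h1, h2⟩, h3⟩
          refine ⟨h1, fun i hi1 hi2 => ?_⟩
          rcases Nat.lt_or_ge i (j+1) with h | h
          · exact h2 i hi1 (by omega)
          · rw [show i = j+1 by omega]
            exact h3
      rw [e, indep_event hX hindep (show n+j < n+(j+1) by omega) hSmeas hdep {1}]
      have e1 : {ω : Ω | (fun i => X i ω) ∈ S}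
          = {ω | |stoppedWalk X (k:ℤ) n ω| < (k:ℤ) ∧ ∀ i, 1 ≤ i → i ≤ j → X (n+i) ω = 1} := by
        ext ω
        simp only [Set.mem_setOf_eq, hS, ← stoppedWalk_eq_dwalk]
      have e2 : X (n+(j+1)) ⁻¹' {1} = {ω | X (n+(j+1)) ω = 1} := by
        ext ω; simp
      rw [e1, ih, e2, hup (n+(j+1)), pow_succ, mul_assoc]

lemma Mr_block (hp : p ∈ Set.Ioo (1/2 : ℝ) 1) (hk : 2 ≤ k) (hX : ∀ i, Measurable (X i))
    (hindep : iIndepFun X μ)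
    (hup : ∀ i, μ {ω | X i ω = 1} = ENNReal.ofReal p)
    (hdown : ∀ i, μ {ω | X i ω = -1} = ENNReal.ofReal (1 - p)) (n : ℕ) :
    Mr μ X k (n + 2*k) ≤ (1 - p^(2*k)) * Mr μ X k n := by
  have hG : μ (Gset X)ᶜ = 0 := measure_Gset_compl hp hX hup hdown
  have hp0 : (0:ℝ) ≤ p := by linarith [hp.1]
  set A := {ω : Ω | |stoppedWalk X (k:ℤ) n ω| < (k:ℤ)} with hA
  set E := {ω : Ω | |stoppedWalk X (k:ℤ) n ω| < (k:ℤ)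
    ∧ ∀ i, 1 ≤ i → i ≤ 2*k → X (n+i) ω = 1} with hE
  have hEA : E ⊆ A := fun ω h => h.1
  have hmE : MeasurableSet E := meas_E hX n (2*k)
  have hμE : μ E = μ A * (ENNReal.ofReal p)^(2*k) := block_prob hp hX hindep hup n (2*k)
  have hsub : {ω : Ω | |stoppedWalk X (k:ℤ) (n + 2*k) ω| < (k:ℤ)} ∩ Gset X
      ⊆ (A \ E) ∩ Gset X := by
    rintro ω ⟨hω, hGω⟩
    simp only [Set.mem_setOf_eq, stoppedWalk_eq_dwalk] at hω
    have hAω : ω ∈ A := by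
      simp only [hA, Set.mem_setOf_eq, stoppedWalk_eq_dwalk]
      exact dwalk_interior_mono (by omega) hω
    refine ⟨⟨hAω, fun hEω => ?_⟩, hGω⟩
    simp only [hE, Set.mem_setOf_eq, stoppedWalk_eq_dwalk] at hEω
    obtain ⟨h1, h2⟩ := hEω
    rw [abs_lt] at h1
    have := dwalk_run (k := (k:ℤ)) (x := fun i => X i ω) (2*k) n (by push_cast; omega) (by omega)
      (fun i hi1 hi2 => h2 i hi1 hi2)
    omega
  have hchain : μ {ω : Ω | |stoppedWalk X (k:ℤ) (n + 2*k) ω| < (k:ℤ)} ≤ μ A - μ E := by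
    calc μ {ω : Ω | |stoppedWalk X (k:ℤ) (n + 2*k) ω| < (k:ℤ)}
        = μ ({ω : Ω | |stoppedWalk X (k:ℤ) (n + 2*k) ω| < (k:ℤ)} ∩ Gset X) := by
          apply (measure_eq_of_inter_eq hG ?_).symm
          rw [Set.inter_assoc, Set.inter_self]
      _ ≤ μ ((A \ E) ∩ Gset X) := measure_mono hsub
      _ ≤ μ (A \ E) := measure_mono Set.inter_subset_left
      _ = μ A - μ E := measure_diff hEA hmE.nullMeasurableSet (measure_ne_top μ _)
  have hle : μ E ≤ μ A := measure_mono hEA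
  have := ENNReal.toReal_mono (by
      exact ENNReal.sub_ne_top (measure_ne_top μ _)) hchain
  rw [ENNReal.toReal_sub_of_le hle (measure_ne_top μ _)] at this
  have hEre : (μ E).toReal = Mr μ X k n * p^(2*k) := by
    rw [hμE, ENNReal.toReal_mul, ENNReal.toReal_pow, ENNReal.toReal_ofReal hp0]
    rfl
  have hAre : (μ A).toReal = Mr μ X k n := rfl
  rw [hEre, hAre] at this
  calc Mr μ X k (n + 2*k) ≤ Mr μ X k n - Mr μ X k n * p^(2*k) := this
    _ = (1 - p^(2*k)) * Mr μ X k n := by ring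

end Block

section Final

variable {Ω : Type*} [MeasurableSpace Ω] {μ : Measure Ω} [IsProbabilityMeasure μ]
  {p : ℝ} {k : ℕ} {X : ℕ → Ω → ℤ}

set_option linter.unusedSectionVars false

lemma welfare_eq (hX : ∀ i, Measurable (X i)) (N : ℕ) :
    welfareN μ X (k:ℤ) N
      = (1/(N:ℝ)) * ∑ n ∈ Finset.Icc 1 N, (μ {ω | choice X (k:ℤ) n ω = 1}).toReal := by
  classical
  have hmeas : ∀ n, MeasurableSet {ω : Ω | choice X (k:ℤ) n ω = 1} := by
    intro n
    have hc : Measurable (choice X (k:ℤ) n) := by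
      unfold choice
      exact Measurable.ite (meas_walk_set hX {z | |z| < (k:ℤ)} (n-1)) (hX n)
        ((measurable_of_countable Int.sign).comp (measurable_stoppedWalk hX (k:ℤ) (n-1)))
    exact hc (measurableSet_singleton 1)
  unfold welfareN
  congr 1
  have hcard : ∀ ω : Ω,
      (((Finset.Icc 1 N).filter (fun n => choice X (k:ℤ) n ω = 1)).card : ℝ)
      = ∑ n ∈ Finset.Icc 1 N,
          Set.indicator {ω' : Ω | choice X (k:ℤ) n ω' = 1} (fun _ => (1:ℝ)) ω := by
    intro ω
    rw [Finset.card_filter]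
    push_cast
    refine Finset.sum_congr rfl (fun n _ => ?_)
    by_cases h : choice X (k:ℤ) n ω = 1
    · simp [Set.indicator_apply, h]
    · simp [Set.indicator_apply, h]
  calc ∫ ω, (((Finset.Icc 1 N).filter (fun n => choice X (k:ℤ) n ω = 1)).card : ℝ) ∂μ
      = ∫ ω, (∑ n ∈ Finset.Icc 1 N,
          Set.indicator {ω' : Ω | choice X (k:ℤ) n ω' = 1} (fun _ => (1:ℝ)) ω) ∂μ :=
        integral_congr_ae (Filter.Eventually.of_forall hcard)
    _ = ∑ n ∈ Finset.Icc 1 N,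
          ∫ ω, Set.indicator {ω' : Ω | choice X (k:ℤ) n ω' = 1} (fun _ => (1:ℝ)) ω ∂μ :=
        integral_finset_sum _ (fun n _ => (integrable_const (1:ℝ)).indicator (hmeas n))
    _ = ∑ n ∈ Finset.Icc 1 N, (μ {ω | choice X (k:ℤ) n ω = 1}).toReal := by
        refine Finset.sum_congr rfl (fun n _ => ?_)
        rw [integral_indicator_const (1:ℝ) (hmeas n)]
        simp [measureReal_def]

lemma key_gap (hp : p ∈ Set.Ioo (1/2 : ℝ) 1) (hk : 2 ≤ k) (hX : ∀ i, Measurable (X i))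
    (hindep : iIndepFun X μ)
    (hup : ∀ i, μ {ω | X i ω = 1} = ENNReal.ofReal p)
    (hdown : ∀ i, μ {ω | X i ω = -1} = ENNReal.ofReal (1 - p)) (n : ℕ) :
    p^k/(p^k + (1-p)^k) - (μ {ω | choice X (k:ℤ) (n+1) ω = 1}).toReal
      = (p^k/(p^k + (1-p)^k) - p) * Mr μ X k n := by
  have hp0 : (0:ℝ) < p := by linarith [hp.1]
  have hq0 : (0:ℝ) < 1 - p := by linarith [hp.2]
  have hpk : (0:ℝ) < p^k := pow_pos hp0 k
  have hqk : (0:ℝ) < (1-p)^k := pow_pos hq0 k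
  have hq := choice_prob hp hk hX hindep hup hdown n
  have hm := mass_split hp hk hX hup hdown n
  have hsym := law_sym hp hk hX hindep hup hdown n k
  rw [hsym] at hm
  set r : ℝ := (1-p)/p with hr
  set φ : ℝ := p^k/(p^k + (1-p)^k) with hφ
  have hφ1 : φ * (1 + r^k) = 1 := by
    rw [hφ, hr, div_pow]
    field_simp
  rw [hq]
  linear_combination Lr μ X k n (k:ℤ) * hφ1 - φ * hm

lemma Mr_pow (hp : p ∈ Set.Ioo (1/2 : ℝ) 1) (hk : 2 ≤ k) (hX : ∀ i, Measurable (X i))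
    (hindep : iIndepFun X μ)
    (hup : ∀ i, μ {ω | X i ω = 1} = ENNReal.ofReal p)
    (hdown : ∀ i, μ {ω | X i ω = -1} = ENNReal.ofReal (1 - p)) :
    ∀ J : ℕ, Mr μ X k (2*k*J) ≤ (1 - p^(2*k))^J := by
  have hp0 : (0:ℝ) < p := by linarith [hp.1]
  have hc0 : (0:ℝ) ≤ 1 - p^(2*k) := by
    have := pow_le_one₀ hp0.le (le_of_lt hp.2) (n := 2*k)
    linarith
  intro J
  induction J with
  | zero => simpa using Mr_le_one (μ := μ) (X := X) (k := k) (n := 0)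
  | succ J ih =>
      have h1 := Mr_block hp hk hX hindep hup hdown (2*k*J)
      have h2 : (1 - p^(2*k)) * Mr μ X k (2*k*J) ≤ (1 - p^(2*k)) * (1 - p^(2*k))^J :=
        mul_le_mul_of_nonneg_left ih hc0
      rw [show 2*k*(J+1) = 2*k*J + 2*k by ring]
      calc Mr μ X k (2*k*J + 2*k) ≤ (1 - p^(2*k)) * Mr μ X k (2*k*J) := h1
        _ ≤ (1 - p^(2*k)) * (1 - p^(2*k))^J := h2
        _ = (1 - p^(2*k))^(J+1) := by rw [pow_succ]; ring

lemma Mr_sum_le (hp : p ∈ Set.Ioo (1/2 : ℝ) 1) (hk : 2 ≤ k) (hX : ∀ i, Measurable (X i))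
    (hindep : iIndepFun X μ)
    (hup : ∀ i, μ {ω | X i ω = 1} = ENNReal.ofReal p)
    (hdown : ∀ i, μ {ω | X i ω = -1} = ENNReal.ofReal (1 - p)) (N : ℕ) :
    ∑ i ∈ Finset.range N, Mr μ X k i ≤ 2*(k:ℝ) / p^(2*k) := by
  have hp0 : (0:ℝ) < p := by linarith [hp.1]
  have hppos : (0:ℝ) < p^(2*k) := pow_pos hp0 _
  set c : ℝ := 1 - p^(2*k) with hc
  have hc0 : (0:ℝ) ≤ c := by
    have := pow_le_one₀ hp0.le (le_of_lt hp.2) (n := 2*k)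
    rw [hc]; linarith
  have hsplit : ∀ J : ℕ, ∑ i ∈ Finset.range (2*k*J), Mr μ X k i
      ≤ ∑ j ∈ Finset.range J, (2*(k:ℝ)) * c^j := by
    intro J
    induction J with
    | zero => simp
    | succ J ih =>
        rw [Finset.sum_range_succ, show 2*k*(J+1) = 2*k*J + 2*k by ring,
          Finset.range_eq_Ico,
          ← Finset.sum_Ico_consecutive _ (Nat.zero_le (2*k*J)) (Nat.le_add_right _ _),
          Finset.sum_Ico_eq_sum_range (f := fun i => Mr μ X k i) (m := 2*k*J)
            (n := 2*k*J + 2*k), ← Finset.range_eq_Ico]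
        apply add_le_add ih
        rw [show 2*k*J + 2*k - 2*k*J = 2*k by omega]
        calc ∑ i ∈ Finset.range (2*k), Mr μ X k (2*k*J + i)
            ≤ ∑ _i ∈ Finset.range (2*k), c^J :=
              Finset.sum_le_sum (fun i _ => le_trans
                (Mr_antitone (2*k*J) (2*k*J + i) (by omega))
                (Mr_pow hp hk hX hindep hup hdown J))
          _ = (2*(k:ℝ)) * c^J := by
              rw [Finset.sum_const, Finset.card_range, nsmul_eq_mul]
              push_cast; ring
  have hsub : ∑ i ∈ Finset.range N, Mr μ X k i ≤ ∑ i ∈ Finset.range (2*k*N), Mr μ X k i := by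
    apply Finset.sum_le_sum_of_subset_of_nonneg
    · apply Finset.range_subset_range.mpr
      calc N = 1*N := (one_mul N).symm
        _ ≤ (2*k)*N := Nat.mul_le_mul_right N (by omega)
    · intro i _ _; exact Mr_nonneg
  have hgeom : ∑ j ∈ Finset.range N, c^j ≤ 1/p^(2*k) := by
    rw [le_div_iff₀ hppos]
    have hgm := geom_sum_mul c N
    have hcN : (0:ℝ) ≤ c^N := pow_nonneg hc0 N
    nlinarith [hgm, hcN]
  calc ∑ i ∈ Finset.range N, Mr μ X k i ≤ ∑ i ∈ Finset.range (2*k*N), Mr μ X k i := hsub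
    _ ≤ ∑ j ∈ Finset.range N, (2*(k:ℝ)) * c^j := hsplit N
    _ = (2*(k:ℝ)) * ∑ j ∈ Finset.range N, c^j := by rw [Finset.mul_sum]
    _ ≤ (2*(k:ℝ)) * (1/p^(2*k)) := by
        apply mul_le_mul_of_nonneg_left hgeom
        positivity
    _ = 2*(k:ℝ) / p^(2*k) := by ring

end Final

end SLProof

/-- **Proposition 7(ii)** (rate of welfare convergence): with cascade threshold `k ≥ 2`,
`φ_k − W_N(k) = Θ(1/N)`, where `φ_k = p^k/(p^k + (1−p)^k)` is the infinite-population
equilibrium welfare. -/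
theorem welfare_convergence_rate {Ω : Type*} [MeasurableSpace Ω] (μ : Measure Ω)
    [IsProbabilityMeasure μ] (p : ℝ) (hp : p ∈ Set.Ioo (1 / 2 : ℝ) 1)
    (k : ℕ) (hk : 2 ≤ k)
    (X : ℕ → Ω → ℤ) (hX : ∀ i, Measurable (X i))
    (hindep : iIndepFun X μ)
    (hup : ∀ i, μ {ω | X i ω = 1} = ENNReal.ofReal p)
    (hdown : ∀ i, μ {ω | X i ω = -1} = ENNReal.ofReal (1 - p)) :
    ∃ a b : ℝ, ∃ N₀ : ℕ, 0 < a ∧ a ≤ b ∧ ∀ N : ℕ, N₀ ≤ N →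
      a / N ≤ p ^ k / (p ^ k + (1 - p) ^ k) - welfareN μ X (k : ℤ) N ∧
      p ^ k / (p ^ k + (1 - p) ^ k) - welfareN μ X (k : ℤ) N ≤ b / N := by
  classical
  open SLProof in
  have hp0 : (0:ℝ) < p := by linarith [hp.1]
  have hq0 : (0:ℝ) < 1 - p := by linarith [hp.2]
  have hD : (0:ℝ) < p^k + (1-p)^k := by positivity
  -- positivity of the gap constant φ − p
  have hφp : 0 < p ^ k / (p ^ k + (1 - p) ^ k) - p := by
    rw [sub_pos, lt_div_iff₀ hD]
    have hqp : 1 - p < p := by linarith [hp.1]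
    have h1 : (1-p)^(k-1) < p^(k-1) :=
      pow_lt_pow_left₀ hqp hq0.le (by omega)
    have e1 : (1-p)^k = (1-p)^(k-1) * (1-p) := by
      conv_lhs => rw [show k = (k-1)+1 by omega]
      rw [pow_succ]
    have e2 : p^k = p^(k-1) * p := by
      conv_lhs => rw [show k = (k-1)+1 by omega]
      rw [pow_succ]
    have h2 : p * (1-p) * (1-p)^(k-1) < p * (1-p) * p^(k-1) :=
      mul_lt_mul_of_pos_left h1 (mul_pos hp0 hq0)
    nlinarith [h2, e1, e2]
  set a : ℝ := p ^ k / (p ^ k + (1 - p) ^ k) - p with ha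
  have hcoef : (1:ℝ) ≤ 2*(k:ℝ)/p^(2*k) := by
    rw [le_div_iff₀ (pow_pos hp0 _)]
    have h1 : p^(2*k) ≤ 1 := pow_le_one₀ hp0.le (le_of_lt hp.2)
    have h2 : (2:ℝ) ≤ 2*(k:ℝ) := by
      have : (1:ℝ) ≤ (k:ℝ) := by exact_mod_cast (by omega : 1 ≤ k)
      nlinarith
    nlinarith
  refine ⟨a, a * (2*(k:ℝ)/p^(2*k)), 1, hφp, ?_, ?_⟩
  · nlinarith [mul_le_mul_of_nonneg_left hcoef hφp.le]
  · intro N hN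
    have hN0 : 0 < N := hN
    have hNr : (0:ℝ) < N := by exact_mod_cast hN0
    -- the exact formula for the welfare gap
    have hwf : p ^ k / (p ^ k + (1 - p) ^ k) - welfareN μ X (k:ℤ) N
        = a * (∑ i ∈ Finset.range N, Mr μ X k i) / N := by
      rw [welfare_eq hX N]
      have hsum : ∑ n ∈ Finset.Icc 1 N, (μ {ω | choice X (k:ℤ) n ω = 1}).toReal
          = N*(p ^ k / (p ^ k + (1 - p) ^ k)) - a * ∑ i ∈ Finset.range N, Mr μ X k i := by
        rw [← Finset.Ico_add_one_right_eq_Icc, Finset.sum_Ico_eq_sum_range]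
        simp only [Nat.add_sub_cancel, Nat.succ_sub_one]
        have hterm : ∀ i ∈ Finset.range N,
            (μ {ω | choice X (k:ℤ) (1+i) ω = 1}).toReal
            = (p ^ k / (p ^ k + (1 - p) ^ k)) - a * Mr μ X k i := by
          intro i _
          rw [Nat.add_comm 1 i]
          have := key_gap hp hk hX hindep hup hdown i
          rw [ha]
          linarith [this]
        rw [Finset.sum_congr rfl hterm, Finset.sum_sub_distrib, Finset.sum_const,
          Finset.card_range, ← Finset.mul_sum, nsmul_eq_mul]
      rw [hsum]
      field_simp
      ring
    rw [hwf]
    have hS1 : 1 ≤ ∑ i ∈ Finset.range N, Mr μ X k i := by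
      exact le_trans (le_of_eq (Mr_zero hk).symm)
        (Finset.single_le_sum (f := fun i => Mr μ X k i)
          (fun i _ => Mr_nonneg) (Finset.mem_range.mpr hN0))
    have hS2 : ∑ i ∈ Finset.range N, Mr μ X k i ≤ 2*(k:ℝ)/p^(2*k) :=
      Mr_sum_le hp hk hX hindep hup hdown N
    have hle1 : a ≤ a * ∑ i ∈ Finset.range N, Mr μ X k i := by
      nlinarith [hφp, hS1]
    have hle2 : a * ∑ i ∈ Finset.range N, Mr μ X k i ≤ a * (2*(k:ℝ)/p^(2*k)) :=
      mul_le_mul_of_nonneg_left hS2 hφp.le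
    constructor
    · exact div_le_div_of_nonneg_right hle1 hNr.le
    · exact div_le_div_of_nonneg_right hle2 hNr.le
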